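/- Fix γ > 0 and a real number w ≠ 0. Then the quadratic inequality δ²·(1 + γ·w²) − 2·γ·w·δ + γ·w² > 0 holds for every δ ∈ ℝ if and only if γ·w² > γ − 1 (equivalently, w² > 1 − 1/γ). Consequently, in the two-node model the expected least squares loss is uniquely minimized by the true DAG exactly when the system is strictly varsortable. -/
import Mathlib


/-- The quadratic `δ²·(1 + γw²) − 2γwδ + γw²` is strictly positive for every `δ`
iff `γ·w² > γ − 1` (strict varsortability), for `γ > 0` and `w ≠ 0`. -/
theorem quadratic_positive_iff_strictly_varsortable
    (γ w : ℝ) (hγ : 0 < γ) (hw : w ≠ 0) :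
    (∀ δ : ℝ, δ ^ 2 * (1 + γ * w ^ 2) - 2 * γ * w * δ + γ * w ^ 2 > 0) ↔
      γ * w ^ 2 > γ - 1 := by
  have hw2 : 0 < w ^ 2 := pow_pos (abs_pos.mpr hw) 2 |>.trans_eq (by rw [sq_abs])
  have ha : 0 < 1 + γ * w ^ 2 := by positivity
  constructor
  · intro h
    have := h (γ * w / (1 + γ * w ^ 2))
    have h1 : γ * w ^ 2 * (1 + γ * w ^ 2 - γ) / (1 + γ * w ^ 2) > 0 := by
      have : (γ * w / (1 + γ * w ^ 2)) ^ 2 * (1 + γ * w ^ 2) -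
          2 * γ * w * (γ * w / (1 + γ * w ^ 2)) + γ * w ^ 2 =
          γ * w ^ 2 * (1 + γ * w ^ 2 - γ) / (1 + γ * w ^ 2) := by
        field_simp; ring
      linarith [this ▸ h (γ * w / (1 + γ * w ^ 2))]
    have h2 : 0 < γ * w ^ 2 * (1 + γ * w ^ 2 - γ) := by
      have := (div_pos_iff).mp h1
      rcases this with ⟨a, _⟩ | ⟨_, b⟩
      · exact a
      · linarith
    nlinarith [mul_pos hγ hw2]
  · intro h δ
    nlinarith [sq_nonneg (δ * (1 + γ * w ^ 2) - γ * w), sq_nonneg δ, mul_pos hγ hw2]
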